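/- Let (X, d) be a compact metric space. The functional I, restricted to the set M⁺(X) of finite positive Borel measures on X equipped with the weak-* topology, is continuous. -/

import Mathlib

open MeasureTheory Filter Topology

/-- `dmu μ x = ∫ d(x,y) dμ(y)`, defined via the Jordan decomposition of the
finite signed Borel measure `μ`. -/
noncomputable def dmu {X : Type*} [MetricSpace X] [MeasurableSpace X]
    (μ : SignedMeasure X) (x : X) : ℝ :=
  (∫ y, dist x y ∂μ.toJordanDecomposition.posPart) -
  (∫ y, dist x y ∂μ.toJordanDecomposition.negPart)

/-- `Ibil μ ν = ∫∫ d(x,y) dμ(x)dν(y)`. -/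
noncomputable def Ibil {X : Type*} [MetricSpace X] [MeasurableSpace X]
    (μ ν : SignedMeasure X) : ℝ :=
  (∫ x, dmu ν x ∂μ.toJordanDecomposition.posPart) -
  (∫ x, dmu ν x ∂μ.toJordanDecomposition.negPart)

/-- The energy integral `I(μ) = I(μ, μ)`. -/
noncomputable def Ien {X : Type*} [MetricSpace X] [MeasurableSpace X]
    (μ : SignedMeasure X) : ℝ := Ibil μ μ

/-- Integration of a function against a signed measure, via Jordan decomposition. -/
noncomputable def integSM {X : Type*} [MeasurableSpace X] (μ : SignedMeasure X)
    (f : X → ℝ) : ℝ :=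
  (∫ x, f x ∂μ.toJordanDecomposition.posPart) -
  (∫ x, f x ∂μ.toJordanDecomposition.negPart)

/-- The weak-* topology on the space of finite signed Borel measures on `X`,
i.e. the topology induced by the maps `μ ↦ ∫ f dμ` for `f ∈ C(X, ℝ)`. -/
noncomputable def weakStar (X : Type*) [TopologicalSpace X] [MeasurableSpace X] :
    TopologicalSpace (SignedMeasure X) :=
  TopologicalSpace.induced
    (fun μ : SignedMeasure X => fun f : C(X, ℝ) => integSM μ f) inferInstance

set_option linter.unusedSectionVars false
set_option maxHeartbeats 1000000

lemma negPart_of_nonneg' {X : Type*} [MeasurableSpace X] {μ : SignedMeasure X} (h : 0 ≤ μ) :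
    μ.toJordanDecomposition.negPart = 0 := by
  obtain ⟨i, hi₁, hi₂, hi₃, -, hν⟩ := μ.toJordanDecomposition_spec
  rw [hν]
  ext s hs
  rw [SignedMeasure.toMeasureOfLEZero_apply μ hi₃ hi₁.compl hs]
  have h1 : μ (iᶜ ∩ s) ≤ 0 := by
    have := VectorMeasure.restrict_le_restrict_iff μ 0 hi₁.compl |>.mp hi₃
      (hi₁.compl.inter hs) Set.inter_subset_left
    simpa using this
  have h2 : 0 ≤ μ (iᶜ ∩ s) := by
    have := (VectorMeasure.le_iff').mp h (iᶜ ∩ s)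
    simpa using this
  have : μ (iᶜ ∩ s) = 0 := le_antisymm h1 h2
  simp [this]

section Tensor
variable {X : Type*} [TopologicalSpace X]

/-- The set of "tensor products" `f ⊗ g`. -/
def Mset (X : Type*) [TopologicalSpace X] : Set C(X × X, ℝ) :=
  {h | ∃ f g : C(X, ℝ), h = (f.comp ContinuousMap.fst) * (g.comp ContinuousMap.snd)}

lemma Mset_one : (1 : C(X × X, ℝ)) ∈ Mset X := by
  refine ⟨1, 1, ?_⟩
  ext p
  simp

lemma Mset_mul {h₁ h₂ : C(X × X, ℝ)} (hh₁ : h₁ ∈ Mset X) (hh₂ : h₂ ∈ Mset X) :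
    h₁ * h₂ ∈ Mset X := by
  obtain ⟨f₁, g₁, rfl⟩ := hh₁
  obtain ⟨f₂, g₂, rfl⟩ := hh₂
  refine ⟨f₁ * f₂, g₁ * g₂, ?_⟩
  ext p
  simp [mul_mul_mul_comm]

/-- The submonoid of tensor products. -/
def Msub (X : Type*) [TopologicalSpace X] : Submonoid C(X × X, ℝ) where
  carrier := Mset X
  one_mem' := Mset_one
  mul_mem' := Mset_mul

lemma adjoin_Mset_eq_span :
    Subalgebra.toSubmodule (Algebra.adjoin ℝ (Mset X)) = Submodule.span ℝ (Mset X) := by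
  rw [Algebra.adjoin_eq_span]
  congr 1
  exact congrArg _ (le_antisymm ((Submonoid.closure_le (S := Msub X)).mpr le_rfl)
    Submonoid.subset_closure)


end Tensor

section Aux
variable {X : Type*} [MetricSpace X] [CompactSpace X] [MeasurableSpace X] [BorelSpace X]

lemma cont_integrable (P : Measure X) [IsFiniteMeasure P] {f : X → ℝ} (hf : Continuous f) :
    Integrable f P :=
  hf.integrable_of_hasCompactSupport (HasCompactSupport.of_compactSpace f)

lemma cont_inner (P : Measure X) [IsFiniteMeasure P] (h : C(X × X, ℝ)) :
    Continuous fun x => ∫ y, h (x, y) ∂P := by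
  apply continuous_of_dominated (bound := fun _ => ‖h‖)
  · exact fun x => ((h.continuous.comp (Continuous.prodMk_right x)).aestronglyMeasurable)
  · exact fun x => Eventually.of_forall fun y => h.norm_coe_le_norm (x, y)
  · exact integrable_const _
  · exact Eventually.of_forall fun y =>
      h.continuous.comp (continuous_id.prodMk continuous_const)

/-- `∫∫ h d(pos μ) d(pos μ)` -/
noncomputable def Jfun {X : Type*} [TopologicalSpace X] [MeasurableSpace X]
    (h : C(X × X, ℝ)) (μ : SignedMeasure X) : ℝ :=
  ∫ x, ∫ y, h (x, y) ∂μ.toJordanDecomposition.posPart ∂μ.toJordanDecomposition.posPart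

lemma Jfun_add (h₁ h₂ : C(X × X, ℝ)) (μ : SignedMeasure X) :
    Jfun (h₁ + h₂) μ = Jfun h₁ μ + Jfun h₂ μ := by
  set P := μ.toJordanDecomposition.posPart
  have i1 : ∀ (h : C(X × X, ℝ)) x, Integrable (fun y => h (x, y)) P := fun h x =>
    cont_integrable P (h.continuous.comp (Continuous.prodMk_right x))
  have i2 : ∀ h : C(X × X, ℝ), Integrable (fun x => ∫ y, h (x, y) ∂P) P := fun h =>
    cont_integrable P (cont_inner P h)
  simp only [Jfun, ContinuousMap.add_apply]
  rw [← integral_add (i2 h₁) (i2 h₂)]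
  congr 1
  ext x
  exact integral_add (i1 h₁ x) (i1 h₂ x)

lemma Jfun_smul (c : ℝ) (h : C(X × X, ℝ)) (μ : SignedMeasure X) :
    Jfun (c • h) μ = c • Jfun h μ := by
  simp only [Jfun, ContinuousMap.smul_apply, integral_smul]

lemma Jfun_prod (f g : C(X, ℝ)) (μ : SignedMeasure X) :
    Jfun ((f.comp (ContinuousMap.fst)) * (g.comp (ContinuousMap.snd))) μ =
      (∫ x, f x ∂μ.toJordanDecomposition.posPart) *
      (∫ y, g y ∂μ.toJordanDecomposition.posPart) := by
  simp only [Jfun, ContinuousMap.mul_apply, ContinuousMap.comp_apply,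
    ContinuousMap.fst_apply, ContinuousMap.snd_apply, integral_const_mul, integral_mul_const]

lemma Jfun_sub_bound (h₁ h₂ : C(X × X, ℝ)) (μ : SignedMeasure X) :
    |Jfun h₁ μ - Jfun h₂ μ| ≤
      ‖h₁ - h₂‖ * (μ.toJordanDecomposition.posPart Set.univ).toReal *
        (μ.toJordanDecomposition.posPart Set.univ).toReal := by
  set P := μ.toJordanDecomposition.posPart
  have i1 : ∀ (h : C(X × X, ℝ)) x, Integrable (fun y => h (x, y)) P := fun h x =>
    cont_integrable P (h.continuous.comp (Continuous.prodMk_right x))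
  have i2 : ∀ h : C(X × X, ℝ), Integrable (fun x => ∫ y, h (x, y) ∂P) P := fun h =>
    cont_integrable P (cont_inner P h)
  have step1 : ∀ x, ‖(∫ y, h₁ (x, y) ∂P) - ∫ y, h₂ (x, y) ∂P‖ ≤
      ‖h₁ - h₂‖ * (P Set.univ).toReal := by
    intro x
    rw [← integral_sub (i1 h₁ x) (i1 h₂ x)]
    refine norm_integral_le_of_norm_le_const (Eventually.of_forall fun y => ?_)
    have := (h₁ - h₂).norm_coe_le_norm (x, y)
    simpa using this
  have key : Jfun h₁ μ - Jfun h₂ μ =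
      ∫ x, ((∫ y, h₁ (x, y) ∂P) - ∫ y, h₂ (x, y) ∂P) ∂P := by
    rw [integral_sub (i2 h₁) (i2 h₂)]; rfl
  rw [← Real.norm_eq_abs, key]
  exact norm_integral_le_of_norm_le_const (Eventually.of_forall step1)

lemma Ien_eq_Jfun {μ : SignedMeasure X} (h : 0 ≤ μ) :
    Ien μ = Jfun (⟨fun p => dist p.1 p.2, continuous_dist⟩ : C(X × X, ℝ)) μ := by
  simp [Ien, Ibil, dmu, Jfun, negPart_of_nonneg' h]

lemma integSM_eq {μ : SignedMeasure X} (h : 0 ≤ μ) (f : X → ℝ) :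
    integSM μ f = ∫ x, f x ∂μ.toJordanDecomposition.posPart := by
  simp [integSM, negPart_of_nonneg' h]

lemma mass_eq {μ : SignedMeasure X} (h : 0 ≤ μ) :
    integSM μ ⇑(1 : C(X, ℝ)) = (μ.toJordanDecomposition.posPart Set.univ).toReal := by
  rw [integSM_eq h]
  simp [measureReal_def]

lemma Mset_separates : (Algebra.adjoin ℝ (Mset X) : Subalgebra ℝ C(X × X, ℝ)).SeparatesPoints := by
  intro p q hpq
  rw [Ne, Prod.ext_iff, not_and_or] at hpq
  rcases hpq with h1 | h2
  · refine ⟨_, ⟨((⟨fun z => dist z q.1, by fun_prop⟩ : C(X, ℝ)).comp ContinuousMap.fst) *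
      ((1 : C(X, ℝ)).comp ContinuousMap.snd),
      Algebra.subset_adjoin (show _ ∈ Mset X from ⟨_, _, rfl⟩), rfl⟩, ?_⟩
    simpa using dist_ne_zero.mpr h1
  · refine ⟨_, ⟨((1 : C(X, ℝ)).comp ContinuousMap.fst) *
      ((⟨fun z => dist z q.2, by fun_prop⟩ : C(X, ℝ)).comp ContinuousMap.snd),
      Algebra.subset_adjoin (show _ ∈ Mset X from ⟨_, _, rfl⟩), rfl⟩, ?_⟩
    simpa using dist_ne_zero.mpr h2

lemma exists_span_approx (ε : ℝ) (hε : 0 < ε) :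
    ∃ h ∈ Submodule.span ℝ (Mset X),
      ‖h - (⟨fun p => dist p.1 p.2, continuous_dist⟩ : C(X × X, ℝ))‖ < ε := by
  obtain ⟨⟨h, hmem⟩, hnorm⟩ :=
    ContinuousMap.exists_mem_subalgebra_near_continuousMap_of_separatesPoints
      (Algebra.adjoin ℝ (Mset X)) Mset_separates
      (⟨fun p => dist p.1 p.2, continuous_dist⟩ : C(X × X, ℝ)) ε hε
  refine ⟨h, ?_, hnorm⟩
  rw [← Subalgebra.mem_toSubmodule, adjoin_Mset_eq_span] at hmem
  exact hmem

lemma cont_eval (f : C(X, ℝ)) :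
    Continuous[weakStar X, inferInstance] fun μ : SignedMeasure X => integSM μ ⇑f := by
  letI : TopologicalSpace (SignedMeasure X) := weakStar X
  have h1 : Continuous
      (fun μ : SignedMeasure X => fun g : C(X, ℝ) => integSM μ ⇑g) :=
    @continuous_induced_dom (SignedMeasure X) (C(X, ℝ) → ℝ)
      (fun μ => fun g : C(X, ℝ) => integSM μ ⇑g) Pi.topologicalSpace
  exact (continuous_apply f).comp h1

end Aux

/-- The functional `I`, restricted to the set of positive finite Borel measures
with the (subspace) weak-* topology, is continuous. -/
theorem stmt_9 {X : Type*} [MetricSpace X] [CompactSpace X]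
    [MeasurableSpace X] [BorelSpace X] :
    @ContinuousOn (SignedMeasure X) ℝ (weakStar X) _ Ien
      {μ : SignedMeasure X | 0 ≤ μ} := by
  letI : TopologicalSpace (SignedMeasure X) := weakStar X
  intro μ₀ hμ₀
  set S : Set (SignedMeasure X) := {μ : SignedMeasure X | 0 ≤ μ} with hS
  set D : C(X × X, ℝ) := ⟨fun p => dist p.1 p.2, continuous_dist⟩ with hD
  set mass : SignedMeasure X → ℝ :=
    fun μ => (μ.toJordanDecomposition.posPart Set.univ).toReal with hmass
  have hμ₀S : (0 : SignedMeasure X) ≤ μ₀ := hμ₀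
  -- continuity of evaluations
  have heval : ∀ f : C(X, ℝ),
      Tendsto (fun μ => integSM μ ⇑f) (𝓝[S] μ₀) (𝓝 (integSM μ₀ ⇑f)) := by
    intro f
    exact ((cont_eval f).tendsto μ₀).mono_left nhdsWithin_le_nhds
  have hSmem : S ∈ 𝓝[S] μ₀ := self_mem_nhdsWithin
  -- tendsto for elements of the span
  have hspan : ∀ h ∈ Submodule.span ℝ (Mset X),
      Tendsto (fun μ => Jfun h μ) (𝓝[S] μ₀) (𝓝 (Jfun h μ₀)) := by
    intro h hh
    induction hh using Submodule.span_induction with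
    | mem h hmem =>
      obtain ⟨f, g, rfl⟩ := hmem
      have hcongr : ∀ μ ∈ S, Jfun ((f.comp ContinuousMap.fst) * (g.comp ContinuousMap.snd)) μ
          = integSM μ ⇑f * integSM μ ⇑g := by
        intro μ hμ
        rw [Jfun_prod, integSM_eq hμ, integSM_eq hμ]
      have := ((heval f).mul (heval g))
      rw [show integSM μ₀ ⇑f * integSM μ₀ ⇑g
          = Jfun ((f.comp ContinuousMap.fst) * (g.comp ContinuousMap.snd)) μ₀ from
          (hcongr μ₀ hμ₀).symm] at this
      refine this.congr' ?_
      filter_upwards [hSmem] with μ hμ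
      exact (hcongr μ hμ).symm
    | zero =>
      have : ∀ μ : SignedMeasure X, Jfun (0 : C(X × X, ℝ)) μ = 0 := by
        intro μ; simp [Jfun]
      simp only [this]
      exact tendsto_const_nhds
    | add h₁ h₂ hm₁ hm₂ ih₁ ih₂ =>
      simp only [Jfun_add]
      exact ih₁.add ih₂
    | smul c h hm ih =>
      simp only [Jfun_smul]
      exact ih.const_smul c
  -- main estimate
  rw [ContinuousWithinAt, Metric.tendsto_nhds]
  intro ε hε
  set B : ℝ := mass μ₀ + 1 with hB
  have hmass₀ : 0 ≤ mass μ₀ := ENNReal.toReal_nonneg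
  have hBpos : 0 < B := by positivity
  set ε' : ℝ := ε / (3 * (B ^ 2 + 1)) with hε'
  have hε'pos : 0 < ε' := by positivity
  obtain ⟨h, hhspan, hhnorm⟩ := exists_span_approx (X := X) ε' hε'pos
  have E2 := (hspan h hhspan)
  rw [Metric.tendsto_nhds] at E2
  have E2' := E2 (ε / 3) (by positivity)
  -- eventual mass bound
  have E3 : ∀ᶠ μ in 𝓝[S] μ₀, μ ∈ S ∧ mass μ ≤ B := by
    have h1 := (heval 1)
    rw [Metric.tendsto_nhds] at h1
    filter_upwards [h1 1 one_pos, hSmem] with μ hd hμ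
    refine ⟨hμ, ?_⟩
    rw [mass_eq hμ, mass_eq hμ₀S, Real.dist_eq] at hd
    have := abs_lt.mp hd
    rw [hmass, hB]
    linarith [this.1, this.2]
  filter_upwards [E2', E3] with μ hJ ⟨hμS, hμB⟩
  have hμpos : (0 : SignedMeasure X) ≤ μ := hμS
  rw [Real.dist_eq, Ien_eq_Jfun hμpos, Ien_eq_Jfun hμ₀S]
  rw [Real.dist_eq] at hJ
  have t1 : |Jfun D μ - Jfun h μ| ≤ ‖h - D‖ * mass μ * mass μ := by
    rw [abs_sub_comm]
    exact Jfun_sub_bound h D μ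
  have t3 : |Jfun h μ₀ - Jfun D μ₀| ≤ ‖h - D‖ * mass μ₀ * mass μ₀ :=
    Jfun_sub_bound h D μ₀
  have hmμ : 0 ≤ mass μ := ENNReal.toReal_nonneg
  have hnn : 0 ≤ ‖h - D‖ := norm_nonneg _
  have hmB : mass μ₀ ≤ B := by rw [hB]; linarith
  have key1 : ‖h - D‖ * mass μ * mass μ < ε / 3 := by
    have : ‖h - D‖ * mass μ * mass μ ≤ ε' * B * B := by
      have h1 : mass μ * mass μ ≤ B * B := by nlinarith
      nlinarith [hhnorm.le]
    have h2 : ε' * B * B < ε / 3 := by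
      rw [hε']
      rw [div_mul_eq_mul_div, div_mul_eq_mul_div, div_lt_div_iff₀ (by positivity) (by positivity)]
      nlinarith
    exact lt_of_le_of_lt this h2
  have key3 : ‖h - D‖ * mass μ₀ * mass μ₀ < ε / 3 := by
    have hhn2 : ‖h - D‖ ≤ ε' := hhnorm.le
    have hmm : mass μ₀ * mass μ₀ ≤ B * B := mul_le_mul hmB hmB hmass₀ hBpos.le
    have : ‖h - D‖ * mass μ₀ * mass μ₀ ≤ ε' * B * B := by
      nlinarith [mul_le_mul hhn2 hmm (mul_nonneg hmass₀ hmass₀) hε'pos.le]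
    have h2 : ε' * B * B < ε / 3 := by
      rw [hε']
      rw [div_mul_eq_mul_div, div_mul_eq_mul_div, div_lt_div_iff₀ (by positivity) (by positivity)]
      nlinarith
    exact lt_of_le_of_lt this h2
  calc |Jfun D μ - Jfun D μ₀|
      ≤ |Jfun D μ - Jfun h μ| + |Jfun h μ - Jfun h μ₀| + |Jfun h μ₀ - Jfun D μ₀| := by
        have := abs_sub_le (Jfun D μ) (Jfun h μ) (Jfun D μ₀)
        have := abs_sub_le (Jfun h μ) (Jfun h μ₀) (Jfun D μ₀)
        linarith [abs_sub_le (Jfun D μ) (Jfun h μ) (Jfun D μ₀),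
          abs_sub_le (Jfun h μ) (Jfun h μ₀) (Jfun D μ₀)]
    _ < ε / 3 + ε / 3 + ε / 3 := by
        have := t1.trans_lt key1
        have := t3.trans_lt key3
        linarith [t1.trans_lt key1, hJ, t3.trans_lt key3]
    _ = ε := by ring
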